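/- (Gaussianity of the affinely transported ensemble posterior) Let x be an uncertain variable on ℝⁿ described by N̄(μ, Σ) with Σ positive definite, let K, K̃ be the Kalman and adjusted gains as in the SqrtEnKF, and define the affine map M̂(x) = (I - K̃H)x + (K̃Hμ + Ky - KHμ). Then M̂(x) is described by the Gaussian possibility function N̄(μ + K(y - Hμ), (I - KH)Σ), i.e., the pushforward of N̄(μ, Σ) under M̂ equals N̄(μ + K(y - Hμ), (I - KH)Σ) — which is the Kalman filter posterior. -/
import Mathlib

open Matrix

lemma myCiSup_singleton {α : Type*} [Nonempty α] (f : α → ℝ) (a : α) (hf : 0 ≤ f a) :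
    (⨆ x ∈ ({a} : Set α), f x) = f a := by
  apply le_antisymm
  · apply ciSup_le
    intro x
    by_cases hx : x ∈ ({a} : Set α)
    · rw [ciSup_pos hx]
      rcases hx with rfl
      exact le_rfl
    · haveI : IsEmpty (x ∈ ({a} : Set α)) := ⟨hx⟩
      rw [Real.iSup_of_isEmpty]
      exact hf
  · have hb : BddAbove (Set.range fun x => ⨆ _ : x ∈ ({a} : Set α), f x) := by
      refine ⟨max (f a) 0, ?_⟩
      rintro _ ⟨x, rfl⟩
      show (⨆ _ : x ∈ ({a} : Set α), f x) ≤ max (f a) 0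
      by_cases hx : x ∈ ({a} : Set α)
      · rw [ciSup_pos hx]
        rcases hx with rfl
        exact le_max_left _ _
      · haveI : IsEmpty (x ∈ ({a} : Set α)) := ⟨hx⟩
        rw [Real.iSup_of_isEmpty]
        exact le_max_right _ _
    have := le_ciSup hb a
    simpa [ciSup_pos (Set.mem_singleton a)] using this

lemma myCancel {m : ℕ} (L : Matrix (Fin m) (Fin m) ℝ) (hL : IsUnit L.det)
    (X Y : Matrix (Fin m) (Fin m) ℝ) (h : L * X * Lᵀ = L * Y * Lᵀ) : X = Y := by
  have hLT : IsUnit Lᵀ.det := by rwa [det_transpose]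
  have h1 : ∀ Z : Matrix (Fin m) (Fin m) ℝ, L⁻¹ * (L * Z * Lᵀ) * (Lᵀ)⁻¹ = Z := by
    intro Z
    calc L⁻¹ * (L * Z * Lᵀ) * (Lᵀ)⁻¹ = (L⁻¹ * L) * Z * (Lᵀ * (Lᵀ)⁻¹) := by
          noncomm_ring
      _ = Z := by rw [nonsing_inv_mul _ hL, mul_nonsing_inv _ hLT, one_mul, mul_one]
  calc X = L⁻¹ * (L * X * Lᵀ) * (Lᵀ)⁻¹ := (h1 X).symm
    _ = L⁻¹ * (L * Y * Lᵀ) * (Lᵀ)⁻¹ := by rw [h]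
    _ = Y := h1 Y

lemma myLowerTriangularDetUnit {m : ℕ} (M : Matrix (Fin m) (Fin m) ℝ)
    (hlow : ∀ i j : Fin m, i < j → M i j = 0) (hdiag : ∀ i : Fin m, 0 < M i i) :
    IsUnit M.det := by
  rw [Matrix.det_of_lowerTriangular M
    (fun i j h => hlow i j (by exact OrderDual.toDual_lt_toDual.mp h))]
  exact (Finset.prod_pos (fun i _ => hdiag i)).ne'.isUnit

/-- The Gaussian possibility function on ℝⁿ with parameters μ and Σ. -/
noncomputable def gaussPoss {n : ℕ} (μ : Fin n → ℝ) (S : Matrix (Fin n) (Fin n) ℝ)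
    (θ : Fin n → ℝ) : ℝ :=
  Real.exp (-(1/2) * ((θ - μ) ⬝ᵥ (S⁻¹ *ᵥ (θ - μ))))

/-- the pushforward of N̄(μ, Σ) under the SqrtEnKF affine update map
M̂(x) = (I - K̃H)x + (K̃Hμ + Ky - KHμ) is the Kalman filter posterior
N̄(μ + K(y - Hμ), (I - KH)Σ). -/
theorem pEnKF_update_gaussian {n m : ℕ}
    (Sg : Matrix (Fin n) (Fin n) ℝ) (H : Matrix (Fin m) (Fin n) ℝ)
    (V S12 V12 : Matrix (Fin m) (Fin m) ℝ) (μ : Fin n → ℝ) (y : Fin m → ℝ)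
    (hSg : Sg.PosDef) (hV : V.PosDef)
    (hS12low : ∀ i j : Fin m, i < j → S12 i j = 0) (hS12diag : ∀ i : Fin m, 0 < S12 i i)
    (hS12 : S12 * S12ᵀ = H * Sg * Hᵀ + V)
    (hV12low : ∀ i j : Fin m, i < j → V12 i j = 0) (hV12diag : ∀ i : Fin m, 0 < V12 i i)
    (hV12 : V12 * V12ᵀ = V)
    -- the Kalman gain and the adjusted gain
    (K Kt : Matrix (Fin n) (Fin m) ℝ)
    (hK : K = Sg * Hᵀ * (H * Sg * Hᵀ + V)⁻¹)
    (hKt : Kt = Sg * Hᵀ * (S12ᵀ)⁻¹ * (S12 + V12)⁻¹)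
    (hinv : IsUnit (1 - Kt * H)) :
    ∀ z : Fin n → ℝ,
      (⨆ x ∈ {x : Fin n → ℝ |
          (1 - Kt * H) *ᵥ x + (Kt *ᵥ (H *ᵥ μ) + K *ᵥ y - K *ᵥ (H *ᵥ μ)) = z},
        gaussPoss μ Sg x)
        = gaussPoss (μ + K *ᵥ (y - H *ᵥ μ)) ((1 - K * H) * Sg) z := by
  intro z
  -- notation
  set T : Matrix (Fin m) (Fin m) ℝ := S12 + V12 with hT
  set L : Matrix (Fin m) (Fin m) ℝ := T * S12ᵀ with hL
  set A : Matrix (Fin n) (Fin n) ℝ := 1 - Kt * H with hA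
  -- determinant facts
  have hS12det : IsUnit S12.det := myLowerTriangularDetUnit S12 hS12low hS12diag
  have hS12Tdet : IsUnit S12ᵀ.det := by rwa [det_transpose]
  have hTdet : IsUnit T.det := by
    refine myLowerTriangularDetUnit T (fun i j h => ?_) (fun i => ?_)
    · show S12 i j + V12 i j = 0
      rw [hS12low i j h, hV12low i j h, add_zero]
    · show 0 < S12 i i + V12 i i
      exact add_pos (hS12diag i) (hV12diag i)
  have hLdet : IsUnit L.det := by rw [hL, det_mul]; exact hTdet.mul hS12Tdet
  have hAdet : IsUnit A.det := (Matrix.isUnit_iff_isUnit_det A).mp hinv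
  -- symmetry of Sg
  have hSgT : Sgᵀ = Sg := by
    ext i j
    have := congrFun (congrFun hSg.1 i) j
    simpa [Matrix.conjTranspose_apply] using this
  -- H * Sg * Hᵀ in terms of square roots
  have hHSH : H * Sg * Hᵀ = S12 * S12ᵀ - V := by rw [hS12, add_sub_cancel_right]
  -- Kt in terms of L
  have hKt' : Kt = Sg * Hᵀ * L⁻¹ := by
    rw [hKt, hL, Matrix.mul_inv_rev, hT, Matrix.mul_assoc]
  -- K in terms of S12
  have hK' : K = Sg * Hᵀ * (S12 * S12ᵀ)⁻¹ := by rw [hK, ← hS12]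
  -- key square-root identity
  have hWsum : L⁻¹ + (Lᵀ)⁻¹ - L⁻¹ * (S12 * S12ᵀ - V) * (Lᵀ)⁻¹ = (S12 * S12ᵀ)⁻¹ := by
    have eLL : L⁻¹ * L = 1 := nonsing_inv_mul _ hLdet
    have eTT : Lᵀ * (Lᵀ)⁻¹ = 1 := mul_nonsing_inv _ (by rwa [det_transpose])
    have eT1 : T⁻¹ * T = 1 := nonsing_inv_mul _ hTdet
    have eT2 : Tᵀ * (Tᵀ)⁻¹ = 1 := mul_nonsing_inv _ (by rwa [det_transpose])
    have hsum : Lᵀ + L - (S12 * S12ᵀ - V) = T * Tᵀ := by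
      rw [hL, ← hV12, transpose_mul, transpose_transpose, hT, transpose_add]
      noncomm_ring
    calc L⁻¹ + (Lᵀ)⁻¹ - L⁻¹ * (S12 * S12ᵀ - V) * (Lᵀ)⁻¹
        = L⁻¹ * Lᵀ * (Lᵀ)⁻¹ + L⁻¹ * L * (Lᵀ)⁻¹ - L⁻¹ * (S12 * S12ᵀ - V) * (Lᵀ)⁻¹ := by
          rw [mul_assoc L⁻¹ Lᵀ, eTT, mul_one, eLL, one_mul]
      _ = L⁻¹ * (Lᵀ + L - (S12 * S12ᵀ - V)) * (Lᵀ)⁻¹ := by noncomm_ring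
      _ = L⁻¹ * (T * Tᵀ) * (Lᵀ)⁻¹ := by rw [hsum]
      _ = S12ᵀ⁻¹ * T⁻¹ * (T * Tᵀ) * (Tᵀ⁻¹ * S12⁻¹) := by
          rw [hL, Matrix.mul_inv_rev, transpose_mul, transpose_transpose, Matrix.mul_inv_rev]
      _ = S12ᵀ⁻¹ * (T⁻¹ * T) * (Tᵀ * Tᵀ⁻¹) * S12⁻¹ := by noncomm_ring
      _ = (S12 * S12ᵀ)⁻¹ := by rw [eT1, eT2, mul_one, mul_one, Matrix.mul_inv_rev]
  -- the main covariance identity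
  have key : A * Sg * Aᵀ = (1 - K * H) * Sg := by
    have expand : A * Sg * Aᵀ
        = Sg - Sg * Hᵀ * (L⁻¹ + (Lᵀ)⁻¹ - L⁻¹ * (H * Sg * Hᵀ) * (Lᵀ)⁻¹) * (H * Sg) := by
      rw [hA, hKt']
      simp only [transpose_sub, transpose_one, transpose_mul, transpose_transpose,
        Matrix.transpose_nonsing_inv, hSgT, Matrix.mul_sub, Matrix.sub_mul,
        Matrix.mul_add, Matrix.add_mul, Matrix.mul_one, Matrix.one_mul, Matrix.mul_assoc]
      abel
    rw [expand, hHSH, hWsum, hK']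
    simp only [Matrix.sub_mul, Matrix.one_mul, Matrix.mul_assoc]
  -- the affine map has a unique preimage of z
  have hAi : A⁻¹ * A = 1 := nonsing_inv_mul _ hAdet
  have hAi' : A * A⁻¹ = 1 := mul_nonsing_inv _ hAdet
  set b : Fin n → ℝ := Kt *ᵥ (H *ᵥ μ) + K *ᵥ y - K *ᵥ (H *ᵥ μ) with hb
  set x₀ : Fin n → ℝ := A⁻¹ *ᵥ (z - b) with hx₀
  have hset : {x : Fin n → ℝ | A *ᵥ x + b = z} = {x₀} := by
    ext x
    simp only [Set.mem_setOf_eq, Set.mem_singleton_iff]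
    constructor
    · intro h
      have hx : A *ᵥ x = z - b := by rw [← h]; abel
      rw [hx₀, ← hx, Matrix.mulVec_mulVec, hAi, Matrix.one_mulVec]
    · rintro rfl
      rw [hx₀, Matrix.mulVec_mulVec, hAi', Matrix.one_mulVec]
      abel
  set μ' : Fin n → ℝ := μ + K *ᵥ (y - H *ᵥ μ) with hμ'
  have hd : x₀ - μ = A⁻¹ *ᵥ (z - μ') := by
    have h1 : A *ᵥ (x₀ - μ) = z - μ' := by
      rw [Matrix.mulVec_sub, hx₀, Matrix.mulVec_mulVec, hAi', Matrix.one_mulVec]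
      rw [hA, Matrix.sub_mulVec, Matrix.one_mulVec, ← Matrix.mulVec_mulVec]
      rw [hμ', hb, Matrix.mulVec_sub]
      abel
    rw [← h1, Matrix.mulVec_mulVec, hAi, Matrix.one_mulVec]
  have hMinv : ((1 - K * H) * Sg)⁻¹ = (A⁻¹)ᵀ * Sg⁻¹ * A⁻¹ := by
    rw [← key, Matrix.mul_inv_rev, Matrix.mul_inv_rev, Matrix.transpose_nonsing_inv,
      mul_assoc]
  have hquad : (x₀ - μ) ⬝ᵥ Sg⁻¹ *ᵥ (x₀ - μ)
      = (z - μ') ⬝ᵥ ((1 - K * H) * Sg)⁻¹ *ᵥ (z - μ') := by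
    rw [hd, hMinv, ← Matrix.mulVec_mulVec, ← Matrix.mulVec_mulVec]
    conv_rhs => rw [Matrix.dotProduct_mulVec, Matrix.vecMul_transpose]
  rw [hset, myCiSup_singleton (fun x => gaussPoss μ Sg x) x₀ (le_of_lt (Real.exp_pos _))]
  simp only [gaussPoss]
  rw [hquad]
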